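/- For every real α ∈ (0,1) and every real x ≥ 1, one has (x+1)^α + (x−1)^α − 2x^α ≤ α(α−1)·x^{α−2}. -/

import Mathlib

/-- for `α ∈ (0,1)` and `x ≥ 1`,
`(x+1)^α + (x-1)^α - 2 x^α ≤ α (α-1) x^{α-2}` (real powers). -/
theorem concavity_second_difference (α : ℝ) (hα : α ∈ Set.Ioo (0 : ℝ) 1)
    (x : ℝ) (hx : 1 ≤ x) :
    (x + 1) ^ α + (x - 1) ^ α - 2 * x ^ α ≤ α * (α - 1) * x ^ (α - 2) := by
  obtain ⟨hα0, hα1⟩ := hα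
  have hx0 : (0:ℝ) < x := lt_of_lt_of_le one_pos hx
  set p : ℝ := α - 2 with hp
  have hpneg : p ≤ 0 := by simp [hp]; linarith
  -- midpoint convexity of s ↦ s ^ p
  have key : ∀ a b : ℝ, 0 < a → 0 < b → a * b ≤ x ^ 2 →
      2 * x ^ p ≤ a ^ p + b ^ p := by
    intro a b ha hb hab
    have hp2 : p / 2 ≤ 0 := by linarith
    have e1 : x ^ p = (x ^ 2) ^ (p / 2) := by
      rw [← Real.rpow_natCast x 2, ← Real.rpow_mul hx0.le]
      congr 1; push_cast; ring
    have e2 : (x ^ 2) ^ (p / 2) ≤ (a * b) ^ (p / 2) :=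
      Real.rpow_le_rpow_of_nonpos (mul_pos ha hb) hab hp2
    have e3 : (a * b) ^ (p / 2) = a ^ (p / 2) * b ^ (p / 2) :=
      Real.mul_rpow ha.le hb.le
    have e5 : (a ^ (p / 2)) ^ 2 = a ^ p := by
      rw [← Real.rpow_natCast (a ^ (p / 2)) 2, ← Real.rpow_mul ha.le]
      congr 1; push_cast; ring
    have e6 : (b ^ (p / 2)) ^ 2 = b ^ p := by
      rw [← Real.rpow_natCast (b ^ (p / 2)) 2, ← Real.rpow_mul hb.le]
      congr 1; push_cast; ring
    nlinarith [sq_nonneg (a ^ (p / 2) - b ^ (p / 2))]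
  -- the auxiliary functions
  set g : ℝ → ℝ := fun t => α * ((x + t) ^ (α - 1) - (x - t) ^ (α - 1))
      - 2 * α * (α - 1) * x ^ p * t with hg
  set ψ : ℝ → ℝ := fun t => (x + t) ^ α + (x - t) ^ α - 2 * x ^ α
      - α * (α - 1) * x ^ p * t ^ 2 with hψ
  -- derivative of g
  have hgderiv : ∀ t : ℝ, 0 ≤ t → t < 1 →
      HasDerivAt g (α * ((α - 1) * (x + t) ^ (α - 1 - 1)
        + (α - 1) * (x - t) ^ (α - 1 - 1)) - 2 * α * (α - 1) * x ^ p) t := by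
    intro t ht0 ht1
    have hxp : (0:ℝ) < x + t := by linarith
    have hxm : (0:ℝ) < x - t := by linarith
    have d1 : HasDerivAt (fun t : ℝ => (x + t) ^ (α - 1))
        (1 * (α - 1) * (x + t) ^ (α - 1 - 1)) t :=
      ((hasDerivAt_id t).const_add x).rpow_const (Or.inl hxp.ne')
    have d2 : HasDerivAt (fun t : ℝ => (x - t) ^ (α - 1))
        (-1 * (α - 1) * (x - t) ^ (α - 1 - 1)) t :=
      ((hasDerivAt_id t).const_sub x).rpow_const (Or.inl hxm.ne')
    have := (((d1.sub d2).const_mul α).sub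
      ((hasDerivAt_id t).const_mul (2 * α * (α - 1) * x ^ p)))
    convert this using 1
    all_goals first | rfl | ring
  -- g has nonpositive derivative on (0,1)
  have hganti : AntitoneOn g (Set.Ico 0 1) := by
    have hint : interior (Set.Ico (0:ℝ) 1) = Set.Ioo 0 1 := interior_Ico
    apply antitoneOn_of_deriv_nonpos (convex_Ico 0 1)
    · intro t ht
      obtain ⟨ht0, ht1⟩ := ht
      exact (hgderiv t ht0 ht1).continuousAt.continuousWithinAt
    · rw [hint]
      intro t ht
      exact (hgderiv t ht.1.le ht.2).differentiableAt.differentiableWithinAt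
    · rw [hint]
      intro t ht
      rw [(hgderiv t ht.1.le ht.2).deriv]
      have hxp : (0:ℝ) < x + t := by linarith [ht.1]
      have hxm : (0:ℝ) < x - t := by linarith [ht.2]
      have hab : (x + t) * (x - t) ≤ x ^ 2 := by nlinarith [ht.1.le]
      have hk := key (x + t) (x - t) hxp hxm hab
      have he : α - 1 - 1 = p := by rw [hp]; ring
      rw [he]
      have hαm : α * (α - 1) ≤ 0 := by nlinarith
      nlinarith [hk, hαm]
  have hg0 : g 0 = 0 := by simp [hg]
  have hgle : ∀ t ∈ Set.Ico (0:ℝ) 1, g t ≤ 0 := by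
    intro t ht
    have := hganti (Set.mem_Ico.mpr ⟨le_refl 0, one_pos⟩) ht ht.1
    rwa [hg0] at this
  -- ψ has derivative g on (0,1)
  have hψderiv : ∀ t : ℝ, 0 ≤ t → t < 1 → HasDerivAt ψ (g t) t := by
    intro t ht0 ht1
    have hxp : (0:ℝ) < x + t := by linarith
    have hxm : (0:ℝ) < x - t := by linarith
    have d1 : HasDerivAt (fun t : ℝ => (x + t) ^ α)
        (1 * α * (x + t) ^ (α - 1)) t :=
      ((hasDerivAt_id t).const_add x).rpow_const (Or.inl hxp.ne')
    have d2 : HasDerivAt (fun t : ℝ => (x - t) ^ α)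
        (-1 * α * (x - t) ^ (α - 1)) t :=
      ((hasDerivAt_id t).const_sub x).rpow_const (Or.inl hxm.ne')
    have d3 : HasDerivAt (fun t : ℝ => α * (α - 1) * x ^ p * t ^ 2)
        (α * (α - 1) * x ^ p * (2 * t ^ 1)) t :=
      (hasDerivAt_pow 2 t).const_mul _
    have := ((d1.add d2).sub_const (2 * x ^ α)).sub d3
    convert this using 1
    all_goals try simp [hg]
    all_goals first | rfl | ring
  -- ψ continuous on [0,1]
  have hψcont : ContinuousOn ψ (Set.Icc 0 1) := by
    apply ContinuousOn.sub
    apply ContinuousOn.sub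
    apply ContinuousOn.add
    · intro t ht
      exact ((Real.continuousAt_rpow_const (x + t) α (Or.inr hα0.le)).comp
        ((continuous_const.add continuous_id).continuousAt)).continuousWithinAt
    · intro t ht
      exact ((Real.continuousAt_rpow_const (x - t) α (Or.inr hα0.le)).comp
        ((continuous_const.sub continuous_id).continuousAt)).continuousWithinAt
    · exact continuousOn_const
    · exact (continuousOn_const.mul (continuousOn_pow 2))
  -- ψ antitone on [0,1]
  have hψanti : AntitoneOn ψ (Set.Icc 0 1) := by
    have hint : interior (Set.Icc (0:ℝ) 1) = Set.Ioo 0 1 := interior_Icc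
    apply antitoneOn_of_deriv_nonpos (convex_Icc 0 1) hψcont
    · rw [hint]
      intro t ht
      exact (hψderiv t ht.1.le ht.2).differentiableAt.differentiableWithinAt
    · rw [hint]
      intro t ht
      rw [(hψderiv t ht.1.le ht.2).deriv]
      exact hgle t ⟨ht.1.le, ht.2⟩
  have hψ0 : ψ 0 = 0 := by simp [hψ]; ring
  have h1 : ψ 1 ≤ 0 := by
    have := hψanti (Set.mem_Icc.mpr ⟨le_refl 0, zero_le_one⟩)
      (Set.mem_Icc.mpr ⟨zero_le_one, le_refl 1⟩) zero_le_one
    rwa [hψ0] at this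
  have : ψ 1 = (x + 1) ^ α + (x - 1) ^ α - 2 * x ^ α - α * (α - 1) * x ^ p := by
    simp [hψ]
  linarith [h1, this.symm.le]
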